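/- arXiv:math/0103125 — 7 statements merged into one kernel-verified Lean document; each statement's English description precedes it below -/
import Mathlib

section
/- For integers $j \geq 0$ written $p$-adically as $j = \sum_{l\geq 0} a_l p^l$ with $a_l \in [0,p-1]$, one has $\sum_{i=1}^{j} p^{v_p(i)} = \sum_{k\geq 0} (a_k - a_{k+1})(k+1)p^k$, where $p^{v_p(i)}$ denotes the $p$-part of $i$. -/
private lemma abel_aux (c : ℤ) (B : ℕ → ℤ) (n : ℕ) :
    ∑ k ∈ Finset.range n, (B k - (c + 1) * B (k + 1) + c * B (k + 2)) * (k + 1) * c ^ k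
      = B 0 + ∑ k ∈ Finset.range n, B (k + 1) * (c ^ (k + 1) - c ^ k)
        - (n + 1) * c ^ n * B n + n * c ^ n * B (n + 1) := by
  induction n with
  | zero => simp
  | succ n ih =>
      rw [Finset.sum_range_succ,
        Finset.sum_range_succ (f := fun k => B (k + 1) * (c ^ (k + 1) - c ^ k)), ih]
      push_cast
      ring

private lemma lhs_aux (p : ℕ) (hp : p.Prime) (j : ℕ) :
    (∑ i ∈ Finset.Icc 1 j, ((p : ℤ) ^ (padicValNat p i)))
      = j + ∑ k ∈ Finset.range (j + 1),
          ((j / p ^ (k + 1) : ℕ) : ℤ) * ((p : ℤ) ^ (k + 1) - (p : ℤ) ^ k) := by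
  haveI : Fact p.Prime := ⟨hp⟩
  induction j with
  | zero => simp
  | succ j ih =>
      rw [show Finset.Icc 1 (j + 1) = insert (j + 1) (Finset.Icc 1 j) by
          ext x; simp [Finset.mem_Icc]; omega,
        Finset.sum_insert (by simp)]
      rw [ih]
      set v := padicValNat p (j + 1) with hv
      have hpv : p ^ v ∣ j + 1 := pow_padicValNat_dvd
      have hvle : v ≤ j := by
        have h1 : p ^ v ≤ j + 1 := Nat.le_of_dvd (by omega) hpv
        have h2 : v < 2 ^ v := Nat.lt_two_pow_self (n := v)
        have h3 : 2 ^ v ≤ p ^ v := Nat.pow_le_pow_left hp.two_le v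
        omega
      have key : ∑ k ∈ Finset.range (j + 2),
            (((j + 1) / p ^ (k + 1) : ℕ) : ℤ) * ((p : ℤ) ^ (k + 1) - (p : ℤ) ^ k)
          = (∑ k ∈ Finset.range (j + 1),
              ((j / p ^ (k + 1) : ℕ) : ℤ) * ((p : ℤ) ^ (k + 1) - (p : ℤ) ^ k))
            + ((p : ℤ) ^ v - 1) := by
        rw [Finset.sum_range_succ]
        have hz : (j + 1) / p ^ (j + 2) = 0 := by
          apply Nat.div_eq_of_lt
          calc j + 1 < 2 ^ (j + 2) := by
                have h1 := Nat.lt_two_pow_self (n := j + 1)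
                have h2 : 2 ^ (j + 1) ≤ 2 ^ (j + 2) := Nat.pow_le_pow_right (by norm_num) (by omega)
                omega
            _ ≤ p ^ (j + 2) := Nat.pow_le_pow_left hp.two_le _
        rw [hz]
        simp only [Nat.cast_zero, zero_mul, add_zero]
        have hterm : ∀ k ∈ Finset.range (j + 1),
            (((j + 1) / p ^ (k + 1) : ℕ) : ℤ) * ((p : ℤ) ^ (k + 1) - (p : ℤ) ^ k)
              = ((j / p ^ (k + 1) : ℕ) : ℤ) * ((p : ℤ) ^ (k + 1) - (p : ℤ) ^ k)
                + (if k < v then ((p : ℤ) ^ (k + 1) - (p : ℤ) ^ k) else 0) := by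
          intro k _
          have hdd : (j + 1) / p ^ (k + 1)
              = j / p ^ (k + 1) + (if p ^ (k + 1) ∣ (j + 1) then 1 else 0) :=
            Nat.succ_div
          have hdv : p ^ (k + 1) ∣ (j + 1) ↔ k < v := by
            rw [hv, padicValNat_dvd_iff_le (by omega)]
            omega
          rw [hdd]
          by_cases hk : k < v
          · simp only [hdv, hk, if_true]
            push_cast
            ring
          · simp only [hdv, hk, if_false]
            push_cast
            ring
        rw [Finset.sum_congr rfl hterm, Finset.sum_add_distrib]
        congr 1
        rw [← Finset.sum_filter]
        have hfil : Finset.filter (fun k => k < v) (Finset.range (j + 1)) = Finset.range v := by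
          ext k
          simp only [Finset.mem_filter, Finset.mem_range]
          omega
        rw [hfil, Finset.sum_range_sub (f := fun k => (p : ℤ) ^ k)]
        simp
      rw [key]
      have hcast : (p : ℤ) ^ v = ((p ^ v : ℕ) : ℤ) := by push_cast; ring
      push_cast
      ring

/-- For `j ≥ 0` written `p`-adically as `j = ∑ a_l p^l` with digits `a_l = j / p^l % p`,
one has `∑_{i=1}^{j} p^(v_p i) = ∑_{k ≥ 0} (a_k - a_{k+1})(k+1) p^k`. -/
theorem stmt_0 (p : ℕ) (hp : p.Prime) (j : ℕ) :
    (∑ i ∈ Finset.Icc 1 j, ((p : ℤ) ^ (padicValNat p i))) =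
      ∑ k ∈ Finset.range (j + 1),
        (((j / p ^ k % p : ℕ) : ℤ) - ((j / p ^ (k + 1) % p : ℕ) : ℤ)) * (k + 1) * (p : ℤ) ^ k := by
  have hdig : ∀ k : ℕ, ((j / p ^ k % p : ℕ) : ℤ)
      = ((j / p ^ k : ℕ) : ℤ) - (p : ℤ) * ((j / p ^ (k + 1) : ℕ) : ℤ) := by
    intro k
    have h1 : j / p ^ k / p = j / p ^ (k + 1) := by
      rw [Nat.div_div_eq_div_mul, pow_succ]
    have h2 : j / p ^ k % p + p * (j / p ^ k / p) = j / p ^ k := Nat.mod_add_div _ _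
    rw [h1] at h2
    rw [eq_sub_iff_add_eq]
    exact_mod_cast h2
  set B : ℕ → ℤ := fun k => ((j / p ^ k : ℕ) : ℤ) with hB
  have hRHS : ∑ k ∈ Finset.range (j + 1),
        (((j / p ^ k % p : ℕ) : ℤ) - ((j / p ^ (k + 1) % p : ℕ) : ℤ)) * (k + 1) * (p : ℤ) ^ k
      = ∑ k ∈ Finset.range (j + 1),
        (B k - ((p : ℤ) + 1) * B (k + 1) + (p : ℤ) * B (k + 2)) * (k + 1) * (p : ℤ) ^ k := by
    apply Finset.sum_congr rfl
    intro k _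
    rw [hdig k, hdig (k + 1)]
    ring
  have hBz : ∀ m : ℕ, j + 1 ≤ m → B m = 0 := by
    intro m hm
    have hz : j / p ^ m = 0 := by
      apply Nat.div_eq_of_lt
      calc j < 2 ^ m := by
            have h1 := Nat.lt_two_pow_self (n := j)
            have h2 : 2 ^ j ≤ 2 ^ m := Nat.pow_le_pow_right (by norm_num) (by omega)
            omega
        _ ≤ p ^ m := Nat.pow_le_pow_left hp.two_le m
    simp only [hB]
    rw [hz]
    simp
  have hB0 : B 0 = j := by simp [hB]
  rw [hRHS, abel_aux, hBz (j + 1) (by omega), hBz (j + 2) (by omega), hB0,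
    lhs_aux p hp j]
  simp only [mul_zero, add_zero, sub_zero]
  rfl
end

section
/- For integers $i, k$ and $0 \leq a \leq b < c \leq m$, one has $\sum_{j \in \mathbb{Z}} (-1)^j E_{i-j,[a,c[}\, P_{j-k,[a,b]} = (-1)^k E_{i-k,[b+1,c[}$, where $E$ and $P$ denote elementary and complete homogeneous symmetric polynomials in the indeterminates $x_a, \dots$. -/
open MvPolynomial in
/-- Elementary symmetric polynomial `E_{d,s}`, zero for `d < 0`. -/
noncomputable def Esym (d : ℤ) (s : Finset ℕ) : MvPolynomial ℕ ℤ :=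
  if 0 ≤ d then ∑ t ∈ s.powersetCard d.toNat, ∏ i ∈ t, X i else 0

open MvPolynomial in
/-- Complete homogeneous symmetric polynomial `P_{d,s}`, zero for `d < 0`. -/
noncomputable def Hsym (d : ℤ) (s : Finset ℕ) : MvPolynomial ℕ ℤ :=
  if 0 ≤ d then ∑ m ∈ s.sym d.toNat, ((m : Multiset ℕ).map X).prod else 0

section Aux
open MvPolynomial Finset

noncomputable def ee (n : ℕ) (s : Finset ℕ) : MvPolynomial ℕ ℤ :=
  ∑ t ∈ s.powersetCard n, ∏ i ∈ t, X i

noncomputable def hh (n : ℕ) (s : Finset ℕ) : MvPolynomial ℕ ℤ :=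
  ∑ m ∈ s.sym n, ((m : Multiset ℕ).map X).prod

lemma ee_zero (s : Finset ℕ) : ee 0 s = 1 := by simp [ee]

lemma hh_zero (s : Finset ℕ) : hh 0 s = 1 := by
  simp only [hh, Finset.sym_zero, Finset.sum_singleton]
  rfl

lemma hh_succ_empty (n : ℕ) : hh (n+1) (∅ : Finset ℕ) = 0 := by simp [hh]

lemma ee_succ_insert {x : ℕ} {s : Finset ℕ} (hx : x ∉ s) (n : ℕ) :
    ee (n+1) (insert x s) = ee (n+1) s + X x * ee n s := by
  have hinj : ∀ t1 ∈ s.powersetCard n, ∀ t2 ∈ s.powersetCard n,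
      insert x t1 = insert x t2 → t1 = t2 := by
    intro t1 h1 t2 h2 hEq
    have hx1 : x ∉ t1 := fun hc => hx ((Finset.mem_powersetCard.1 h1).1 hc)
    have hx2 : x ∉ t2 := fun hc => hx ((Finset.mem_powersetCard.1 h2).1 hc)
    have := congrArg (fun t => Finset.erase t x) hEq
    simpa [Finset.erase_insert hx1, Finset.erase_insert hx2] using this
  have hd : Disjoint (s.powersetCard (n+1)) ((s.powersetCard n).image (insert x)) := by
    rw [Finset.disjoint_left]
    rintro t ht ht'
    rw [Finset.mem_image] at ht'
    obtain ⟨u, hu, rfl⟩ := ht'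
    exact hx ((Finset.mem_powersetCard.1 ht).1 (Finset.mem_insert_self x u))
  rw [ee, Finset.powersetCard_succ_insert hx, Finset.sum_union hd, Finset.sum_image hinj,
    ee, ee, Finset.mul_sum]
  congr 1
  refine Finset.sum_congr rfl fun t ht => ?_
  have hxt : x ∉ t := fun hc => hx ((Finset.mem_powersetCard.1 ht).1 hc)
  rw [Finset.prod_insert hxt]

lemma sym_insert_eq {x : ℕ} {s : Finset ℕ} (hx : x ∉ s) (n : ℕ) :
    (insert x s).sym (n+1) = s.sym (n+1) ∪ ((insert x s).sym n).image (Sym.cons x) := by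
  ext m
  simp only [Finset.mem_sym_iff, Finset.mem_union, Finset.mem_image]
  constructor
  · intro hm
    by_cases hxm : x ∈ m
    · right
      refine ⟨m.erase x hxm, ?_, Sym.cons_erase hxm⟩
      intro a ha
      have ha' : a ∈ (m : Multiset ℕ).erase x := by
        rw [← Sym.coe_erase hxm]; exact ha
      exact hm a (Multiset.mem_of_mem_erase ha')
    · left
      intro a ha
      rcases Finset.mem_insert.1 (hm a ha) with rfl | h
      · exact absurd ha hxm
      · exact h
  · rintro (hm | ⟨m', hm', rfl⟩)
    · exact fun a ha => Finset.mem_insert_of_mem (hm a ha)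
    · intro a ha
      rcases Sym.mem_cons.1 ha with rfl | h
      · exact Finset.mem_insert_self _ _
      · exact hm' a h

lemma hh_succ_insert {x : ℕ} {s : Finset ℕ} (hx : x ∉ s) (n : ℕ) :
    hh (n+1) (insert x s) = hh (n+1) s + X x * hh n (insert x s) := by
  have hinj : ∀ m1 ∈ (insert x s).sym n, ∀ m2 ∈ (insert x s).sym n,
      Sym.cons x m1 = Sym.cons x m2 → m1 = m2 := by
    intro m1 _ m2 _ hEq
    have h2 := congrArg (fun m : Sym ℕ (n+1) => (m : Multiset ℕ)) hEq
    simp only [Sym.coe_cons] at h2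
    exact Sym.coe_injective ((Multiset.cons_inj_right x).1 h2)
  have hd : Disjoint (s.sym (n+1)) (((insert x s).sym n).image (Sym.cons x)) := by
    rw [Finset.disjoint_left]
    rintro m hm hm'
    rw [Finset.mem_image] at hm'
    obtain ⟨m', _, rfl⟩ := hm'
    exact hx (Finset.mem_sym_iff.1 hm x (Sym.mem_cons_self _ _))
  rw [hh, sym_insert_eq hx, Finset.sum_union hd, Finset.sum_image hinj,
    hh, hh, Finset.mul_sum]
  congr 1
  refine Finset.sum_congr rfl fun m hm => ?_
  rw [Sym.coe_cons, Multiset.map_cons, Multiset.prod_cons]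

lemma key (T : Finset ℕ) : ∀ U : Finset ℕ, Disjoint T U → ∀ n : ℕ,
    ∑ j ∈ Finset.range (n+1), (-1 : MvPolynomial ℕ ℤ)^j * (ee (n-j) (T ∪ U) * hh j T)
      = ee n U := by
  induction T using Finset.induction_on with
  | empty =>
    intro U _ n
    rw [Finset.sum_eq_single_of_mem 0 (Finset.mem_range.2 (Nat.succ_pos n))]
    · simp [hh_zero, Finset.empty_union]
    · intro j _ hj
      obtain ⟨j', rfl⟩ := Nat.exists_eq_succ_of_ne_zero hj
      rw [hh_succ_empty, mul_zero, mul_zero]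
  | @insert x T hxT ih =>
    intro U hdU n
    have hxU : x ∉ U := fun h => Finset.disjoint_left.1 hdU (Finset.mem_insert_self x T) h
    have hTU' : Disjoint T (insert x U) := by
      rw [Finset.disjoint_left]
      intro a haT ha
      rcases Finset.mem_insert.1 ha with rfl | h
      · exact hxT haT
      · exact Finset.disjoint_left.1 hdU (Finset.mem_insert_of_mem haT) h
    have hS : insert x T ∪ U = T ∪ insert x U := by
      rw [Finset.insert_union, Finset.union_insert]
    induction n with
    | zero => simp [ee_zero, hh_zero]
    | succ n ihn =>
      rw [Finset.sum_range_succ']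
      have hterm : ∀ j : ℕ,
          (-1 : MvPolynomial ℕ ℤ)^(j+1) * (ee (n+1-(j+1)) (insert x T ∪ U) * hh (j+1) (insert x T))
            = (-1 : MvPolynomial ℕ ℤ)^(j+1) * (ee (n-j) (insert x T ∪ U) * hh (j+1) T)
              + (-(X x)) * ((-1 : MvPolynomial ℕ ℤ)^j * (ee (n-j) (insert x T ∪ U) * hh j (insert x T))) := by
        intro j
        rw [Nat.succ_sub_succ, hh_succ_insert hxT]
        ring
      have h1 : ∑ j ∈ Finset.range (n+1),
            (-1 : MvPolynomial ℕ ℤ)^(j+1) * (ee (n+1-(j+1)) (insert x T ∪ U) * hh (j+1) (insert x T))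
          = (∑ j ∈ Finset.range (n+1),
              (-1 : MvPolynomial ℕ ℤ)^(j+1) * (ee (n-j) (insert x T ∪ U) * hh (j+1) T))
            + (-(X x)) * ∑ j ∈ Finset.range (n+1),
                (-1 : MvPolynomial ℕ ℤ)^j * (ee (n-j) (insert x T ∪ U) * hh j (insert x T)) := by
        rw [Finset.mul_sum, ← Finset.sum_add_distrib]
        exact Finset.sum_congr rfl fun j _ => hterm j
      rw [h1, ihn]
      have h2 : (∑ j ∈ Finset.range (n+1),
            (-1 : MvPolynomial ℕ ℤ)^(j+1) * (ee (n-j) (insert x T ∪ U) * hh (j+1) T))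
          + (-1 : MvPolynomial ℕ ℤ)^0 * (ee (n+1-0) (insert x T ∪ U) * hh 0 (insert x T))
          = ee (n+1) (insert x U) := by
        rw [← ih (insert x U) hTU' (n+1)]
        conv_rhs => rw [Finset.sum_range_succ']
        rw [hS]
        simp only [Nat.succ_sub_succ, hh_zero, Nat.sub_zero, pow_zero, one_mul]
      rw [ee_succ_insert hxU] at h2
      linear_combination h2

end Aux

open MvPolynomial in
lemma Esym_cast (d : ℕ) (s : Finset ℕ) : Esym (d : ℤ) s = ee d s := by
  simp [Esym, ee]

open MvPolynomial in
lemma Hsym_cast (d : ℕ) (s : Finset ℕ) : Hsym (d : ℤ) s = hh d s := by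
  simp [Hsym, hh]

lemma Esym_neg {d : ℤ} (hd : d < 0) (s : Finset ℕ) : Esym d s = 0 := by
  simp [Esym, not_le.2 hd]

lemma Hsym_neg {d : ℤ} (hd : d < 0) (s : Finset ℕ) : Hsym d s = 0 := by
  simp [Hsym, not_le.2 hd]

/-- For `i, k ∈ ℤ` and `0 ≤ a ≤ b < c ≤ m`:
`∑_{j ∈ ℤ} (-1)^j E_{i-j,[a,c[} P_{j-k,[a,b]} = (-1)^k E_{i-k,[b+1,c[}`. -/
theorem stmt_4 (m a b c : ℕ) (i k : ℤ) (hab : a ≤ b) (hbc : b < c) (hcm : c ≤ m) :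
    (∑ᶠ j : ℤ, MvPolynomial.C ((((-1 : ℤˣ) ^ j : ℤˣ) : ℤ))
        * (Esym (i - j) (Finset.Ico a c) * Hsym (j - k) (Finset.Icc a b)))
      = MvPolynomial.C ((((-1 : ℤˣ) ^ k : ℤˣ) : ℤ)) * Esym (i - k) (Finset.Ico (b + 1) c) := by
  classical
  set S := Finset.Ico a c with hSdef
  set T := Finset.Icc a b with hTdef
  set U := Finset.Ico (b+1) c with hUdef
  have hTU : T ∪ U = S := by
    ext y
    simp only [hSdef, hTdef, hUdef, Finset.mem_union, Finset.mem_Icc, Finset.mem_Ico]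
    omega
  have hd : Disjoint T U := by
    rw [Finset.disjoint_left]
    intro y hy hy'
    simp only [hTdef, Finset.mem_Icc] at hy
    simp only [hUdef, Finset.mem_Ico] at hy'
    omega
  by_cases hik : k ≤ i
  · set n := (i - k).toNat with hn
    have hi : i = k + n := by omega
    have hsupp : Function.support (fun j : ℤ => MvPolynomial.C ((((-1 : ℤˣ) ^ j : ℤˣ) : ℤ))
        * (Esym (i - j) S * Hsym (j - k) T)) ⊆ ↑(Finset.Icc k i) := by
      intro j hj
      simp only [Function.mem_support] at hj
      simp only [Finset.coe_Icc, Set.mem_Icc]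
      by_contra hc
      push_neg at hc
      apply hj
      rcases lt_or_ge j k with h | h
      · rw [Hsym_neg (by omega), mul_zero, mul_zero]
      · rw [Esym_neg (by have := hc h; omega), zero_mul, mul_zero]
    rw [finsum_eq_sum_of_support_subset _ hsupp]
    have hinj : Function.Injective (fun j : ℕ => k + (j : ℤ)) := fun p q hpq => by
            simpa using hpq
    have hmap : Finset.Icc k i
        = (Finset.range (n+1)).map ⟨fun j : ℕ => k + (j : ℤ), hinj⟩ := by
      ext j
      simp only [Finset.mem_Icc, Finset.mem_map, Finset.mem_range, Function.Embedding.coeFn_mk]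
      constructor
      · rintro ⟨h1, h2⟩
        exact ⟨(j - k).toNat, by omega, by omega⟩
      · rintro ⟨p, hp, rfl⟩
        omega
    rw [hmap, Finset.sum_map]
    simp only [Function.Embedding.coeFn_mk]
    have hterm : ∀ j ∈ Finset.range (n+1),
        MvPolynomial.C ((((-1 : ℤˣ) ^ (k + (j:ℤ)) : ℤˣ) : ℤ))
            * (Esym (i - (k + (j:ℤ))) S * Hsym ((k + (j:ℤ)) - k) T)
          = MvPolynomial.C ((((-1 : ℤˣ) ^ k : ℤˣ) : ℤ))
            * ((-1 : MvPolynomial ℕ ℤ)^j * (ee (n-j) S * hh j T)) := by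
      intro j hj
      have hj' : j ≤ n := Nat.lt_succ_iff.1 (Finset.mem_range.1 hj)
      have e1 : i - (k + (j:ℤ)) = ((n - j : ℕ) : ℤ) := by omega
      have e2 : (k + (j:ℤ)) - k = ((j : ℕ) : ℤ) := by omega
      rw [e1, e2, Esym_cast, Hsym_cast]
      have s1 : ((-1 : ℤˣ) ^ (k + (j:ℤ))) = (-1 : ℤˣ)^k * (-1 : ℤˣ)^(j:ℕ) := by
        rw [zpow_add, zpow_natCast]
      rw [s1, Units.val_mul, map_mul, Units.val_pow_eq_pow_val, Units.val_neg, Units.val_one,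
        map_pow, map_neg, map_one, mul_assoc]
    rw [Finset.sum_congr rfl hterm, ← Finset.mul_sum, ← hTU, key T U hd n]
    have e3 : i - k = ((n : ℕ) : ℤ) := by omega
    rw [e3, Esym_cast]
  · push_neg at hik
    have hz : ∀ j : ℤ, MvPolynomial.C ((((-1 : ℤˣ) ^ j : ℤˣ) : ℤ))
        * (Esym (i - j) S * Hsym (j - k) T) = 0 := by
      intro j
      rcases lt_or_ge j k with h | h
      · rw [Hsym_neg (by omega), mul_zero, mul_zero]
      · rw [Esym_neg (by omega), zero_mul, mul_zero]
    rw [finsum_congr hz, finsum_zero, Esym_neg (by omega), mul_zero]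
end

section
/- Let $m \geq 1$, let $V_x = (x_j^i)_{i,j \in [0,m-1]}$ be the Vandermonde matrix, $E_x$ the lower triangular matrix with $(i,j)$-entry $(-1)^{i-j}E_{i-j,[0,i[}$, $Y_x$ the diagonal matrix with $i$-th entry $y_i = \prod_{k < i}(x_i - x_k)$, and $M_x$ the matrix with $(i,j)$-entry $\prod_{k<i}(x_j - x_k) / \prod_{k<i}(x_i - x_k)$. Then $E_x V_x = Y_x M_x$ in the field of rational functions $\mathbb{Q}(x_0, \dots, x_{m-1})$. -/
open MvPolynomial in
/-- Elementary symmetric polynomial `E_{d,s}` in variables indexed by `s`, zero for `d < 0`. -/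
noncomputable def EsymF {σ : Type*} [DecidableEq σ] (d : ℤ) (s : Finset σ) :
    MvPolynomial σ ℚ :=
  if 0 ≤ d then ∑ t ∈ s.powersetCard d.toNat, ∏ i ∈ t, X i else 0

open Polynomial in
lemma finset_prod_X_sub_C_coeff {R : Type*} [CommRing R] {σ : Type*} (s : Finset σ)
    (r : σ → R) {k : ℕ} (h : k ≤ s.card) :
    (∏ i ∈ s, (X - C (r i))).coeff k =
      (-1) ^ (s.card - k) * ∑ t ∈ s.powersetCard (s.card - k), ∏ i ∈ t, r i := by
  have H := Finset.prod_X_add_C_coeff s (fun i => -r i) h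
  simp only [map_neg, ← sub_eq_add_neg] at H
  rw [H, Finset.mul_sum]
  refine Finset.sum_congr rfl fun t ht => ?_
  have hc : t.card = s.card - k := (Finset.mem_powersetCard.mp ht).2
  rw [← hc, Finset.prod_congr rfl (fun i _ => (neg_one_mul (r i)).symm),
    Finset.prod_mul_distrib, Finset.prod_const]

/-- `E_x V_x = Y_x M_x` over the rational function field `ℚ(x_0, …, x_{m-1})`, where
`(V_x)_{ij} = x_j^i`, `(E_x)_{ij} = (-1)^{i-j} E_{i-j,[0,i[}`, `Y_x` is diagonal with entries
`y_i = ∏_{k<i}(x_i - x_k)`, and `(M_x)_{ij} = ∏_{k<i}(x_j - x_k)/∏_{k<i}(x_i - x_k)`. -/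
theorem stmt_6 (m : ℕ) (hm : 1 ≤ m) :
    letI K := FractionRing (MvPolynomial (Fin m) ℚ)
    let x : Fin m → K := fun i => algebraMap (MvPolynomial (Fin m) ℚ) K (MvPolynomial.X i)
    (Matrix.of fun i j : Fin m =>
        ((-1 : K) ^ ((i : ℤ) - (j : ℤ)))
          * algebraMap (MvPolynomial (Fin m) ℚ) K (EsymF ((i : ℤ) - (j : ℤ)) (Finset.Iio i)))
      * (Matrix.of fun i j : Fin m => (x j) ^ (i : ℕ))
      = Matrix.diagonal (fun i : Fin m => ∏ k ∈ Finset.Iio i, (x i - x k))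
        * (Matrix.of fun i j : Fin m =>
            (∏ k ∈ Finset.Iio i, (x j - x k)) / (∏ k ∈ Finset.Iio i, (x i - x k))) := by
  intro x
  have hx : Function.Injective x := by
    intro a b h
    exact MvPolynomial.X_injective
      ((IsFractionRing.injective (MvPolynomial (Fin m) ℚ) (FractionRing (MvPolynomial (Fin m) ℚ))) h)
  ext i j
  have hne : (∏ k ∈ Finset.Iio i, (x i - x k)) ≠ 0 := by
    refine Finset.prod_ne_zero_iff.mpr fun k hk => sub_ne_zero.mpr fun h => ?_
    exact absurd (hx h) (Finset.mem_Iio.mp hk).ne'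
  rw [Matrix.diagonal_mul, Matrix.mul_apply]
  simp only [Matrix.of_apply]
  rw [mul_div_cancel₀ _ hne]
  set p : Polynomial (FractionRing (MvPolynomial (Fin m) ℚ)) := ∏ k ∈ Finset.Iio i, (Polynomial.X - Polynomial.C (x k)) with hp
  have hcard : (Finset.Iio i).card = (i : ℕ) := Fin.card_Iio i
  have hdeg : p.natDegree = (i : ℕ) := by
    rw [hp, Polynomial.natDegree_prod _ _ (fun k _ => Polynomial.X_sub_C_ne_zero (x k))]
    simp [hcard]
  have hterm : ∀ l : Fin m,
      ((-1 : FractionRing (MvPolynomial (Fin m) ℚ)) ^ ((i : ℤ) - (l : ℤ))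
        * algebraMap (MvPolynomial (Fin m) ℚ) (FractionRing (MvPolynomial (Fin m) ℚ)) (EsymF ((i : ℤ) - (l : ℤ)) (Finset.Iio i)))
        = p.coeff l := by
    intro l
    rcases le_or_gt (l : ℕ) (i : ℕ) with hle | hlt
    · have hcast : (i : ℤ) - (l : ℤ) = (((i : ℕ) - (l : ℕ) : ℕ) : ℤ) := by omega
      rw [hcast, EsymF, if_pos (Int.natCast_nonneg _), zpow_natCast, Int.toNat_natCast, hp,
        finset_prod_X_sub_C_coeff _ _ (hcard ▸ hle), hcard]
      rw [map_sum]
      congr 1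
      refine Finset.sum_congr rfl fun t _ => map_prod _ _ _
    · have h0 : EsymF ((i : ℤ) - (l : ℤ)) (Finset.Iio i) = 0 := by
        rw [EsymF, if_neg (by omega)]
      rw [h0, map_zero, mul_zero,
        Polynomial.coeff_eq_zero_of_natDegree_lt (by omega : p.natDegree < (l : ℕ))]
  calc ∑ l : Fin m,
        ((-1 : FractionRing (MvPolynomial (Fin m) ℚ)) ^ ((i : ℤ) - (l : ℤ))
          * algebraMap (MvPolynomial (Fin m) ℚ) (FractionRing (MvPolynomial (Fin m) ℚ)) (EsymF ((i : ℤ) - (l : ℤ)) (Finset.Iio i)))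
          * (x j) ^ (l : ℕ)
      = ∑ l : Fin m, p.coeff l * (x j) ^ (l : ℕ) := by
        exact Finset.sum_congr rfl fun l _ => by rw [hterm l]
    _ = ∑ l ∈ Finset.range m, p.coeff l * (x j) ^ l :=
        Fin.sum_univ_eq_sum_range (fun l => p.coeff l * (x j) ^ l) m
    _ = p.eval (x j) := (Polynomial.eval_eq_sum_range' (lt_of_le_of_lt hdeg.le i.2) _).symm
    _ = ∏ k ∈ Finset.Iio i, (x j - x k) := by
        rw [hp, Polynomial.eval_prod]; simp
end

section
/- Let $m \geq 1$ and let $L_x$ be the strictly upper triangular $m \times m$ matrix with $(i,j)$-entry $\prod_{k \in [0,j[ \setminus \{i\}}(x_j - x_k) / \prod_{k \in [0,j[ \setminus \{i\}}(x_i - x_k)$ for $i < j$ and $0$ for $i \geq j$, and let $M_x$ have $(i,j)$-entry $\prod_{k<i}(x_j - x_k)/\prod_{k<i}(x_i - x_k)$. Then $M_x(I - L_x) = I$ over the field $\mathbb{Q}(x_0, \dots, x_{m-1})$. -/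
open Finset Polynomial

lemma eval_basis_eq {F : Type*} [Field F] {ι : Type*} [DecidableEq ι] (s : Finset ι)
    (v : ι → F) (l : ι) (y : F) :
    eval y (Lagrange.basis s v l) =
      (∏ k ∈ s.erase l, (y - v k)) / (∏ k ∈ s.erase l, (v l - v k)) := by
  rw [Lagrange.basis, eval_prod, ← Finset.prod_div_distrib]
  refine Finset.prod_congr rfl fun k _ => ?_
  rw [Lagrange.basisDivisor]
  simp [div_eq_inv_mul]

lemma key_s7 {F : Type*} [Field F] {m : ℕ} (x : Fin m → F) (hx : Function.Injective x)
    (i j : Fin m) (hij : i < j) :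
    ∏ k ∈ Finset.Iio i, (x j - x k) =
      ∑ l ∈ Finset.Iio j, (∏ k ∈ Finset.Iio i, (x l - x k)) *
        ((∏ k ∈ (Finset.Iio j).erase l, (x j - x k)) /
          (∏ k ∈ (Finset.Iio j).erase l, (x l - x k))) := by
  set f : F[X] := ∏ k ∈ Finset.Iio i, (X - C (x k)) with hf
  have hdeg : f.degree < (#(Finset.Iio j) : ℕ) := by
    rw [hf, Fin.card_Iio]
    calc (∏ k ∈ Finset.Iio i, (X - C (x k))).degree
        ≤ ((#(Finset.Iio i) : ℕ) : WithBot ℕ) := by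
          refine le_trans (Polynomial.degree_prod_le _ _) ?_
          simp [Polynomial.degree_X_sub_C]
      _ < ((j : ℕ) : WithBot ℕ) := by
          rw [Fin.card_Iio]
          exact_mod_cast hij
  have h := Lagrange.eq_interpolate (s := Finset.Iio j) (v := x) (f := f)
    (hx.injOn) hdeg
  have h2 := congrArg (eval (x j)) h
  rw [Lagrange.interpolate_apply, eval_finset_sum] at h2
  have hL : eval (x j) f = ∏ k ∈ Finset.Iio i, (x j - x k) := by
    simp [hf, eval_prod]
  have hR : ∀ l ∈ Finset.Iio j, eval (x j) (C (eval (x l) f) * Lagrange.basis (Finset.Iio j) x l)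
      = (∏ k ∈ Finset.Iio i, (x l - x k)) *
        ((∏ k ∈ (Finset.Iio j).erase l, (x j - x k)) /
          (∏ k ∈ (Finset.Iio j).erase l, (x l - x k))) := by
    intro l _
    rw [eval_mul, eval_C, eval_basis_eq]
    simp [hf, eval_prod]
  rw [hL, Finset.sum_congr rfl hR] at h2
  exact h2

lemma matrix_key {F : Type*} [Field F] {m : ℕ} (x : Fin m → F)
    (hx : Function.Injective x) :
    (Matrix.of fun i j : Fin m =>
        (∏ k ∈ Finset.Iio i, (x j - x k)) / (∏ k ∈ Finset.Iio i, (x i - x k)))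
      * (1 - Matrix.of fun i j : Fin m =>
          if i < j then
            (∏ k ∈ (Finset.Iio j).erase i, (x j - x k))
              / (∏ k ∈ (Finset.Iio j).erase i, (x i - x k))
          else 0)
      = 1 := by
  ext i j
  rw [Matrix.mul_apply]
  simp only [Matrix.sub_apply, Matrix.one_apply, Matrix.of_apply]
  have hD : (∏ k ∈ Finset.Iio i, (x i - x k)) ≠ 0 := by
    refine Finset.prod_ne_zero_iff.2 fun k hk => sub_ne_zero.2 (hx.ne ?_)
    exact ne_of_gt (Finset.mem_Iio.1 hk)
  have hM0 : ∀ l : Fin m, l < i → (∏ k ∈ Finset.Iio i, (x l - x k)) = 0 := fun l hl =>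
    Finset.prod_eq_zero (Finset.mem_Iio.2 hl) (sub_self _)
  rw [← Finset.add_sum_erase _ _ (Finset.mem_univ j)]
  rw [if_pos rfl, if_neg (lt_irrefl j), sub_zero]
  have hrest : ∑ l ∈ Finset.univ.erase j,
      (∏ k ∈ Finset.Iio i, (x l - x k)) / (∏ k ∈ Finset.Iio i, (x i - x k)) *
        ((if l = j then (1:F) else 0) - if l < j then
            (∏ k ∈ (Finset.Iio j).erase l, (x j - x k))
              / (∏ k ∈ (Finset.Iio j).erase l, (x l - x k)) else 0)
      = -∑ l ∈ Finset.Iio j,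
          (∏ k ∈ Finset.Iio i, (x l - x k)) / (∏ k ∈ Finset.Iio i, (x i - x k)) *
            ((∏ k ∈ (Finset.Iio j).erase l, (x j - x k))
              / (∏ k ∈ (Finset.Iio j).erase l, (x l - x k))) := by
    rw [← Finset.sum_neg_distrib]
    refine (Finset.sum_subset (fun l hl => Finset.mem_erase.2
      ⟨ne_of_lt (Finset.mem_Iio.1 hl), Finset.mem_univ l⟩) ?_).symm.trans ?_
    · intro l hmem hl
      rw [Finset.mem_Iio] at hl
      rw [if_neg (Finset.mem_erase.1 hmem).1, if_neg hl, sub_zero, mul_zero]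
    · refine Finset.sum_congr rfl fun l hl => ?_
      rw [if_neg (ne_of_lt (Finset.mem_Iio.1 hl)), if_pos (Finset.mem_Iio.1 hl),
        zero_sub, mul_neg]
  rw [hrest]
  rcases lt_trichotomy i j with h | rfl | h
  · rw [if_neg (ne_of_lt h), mul_one, add_neg_eq_zero, key_s7 x hx i j h, Finset.sum_div]
    exact Finset.sum_congr rfl fun l _ => mul_div_right_comm _ _ _
  · rw [if_pos rfl, mul_one, div_self hD]
    have : ∑ l ∈ Finset.Iio i,
        (∏ k ∈ Finset.Iio i, (x l - x k)) / (∏ k ∈ Finset.Iio i, (x i - x k)) *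
          ((∏ k ∈ (Finset.Iio i).erase l, (x i - x k))
            / (∏ k ∈ (Finset.Iio i).erase l, (x l - x k))) = 0 := by
      refine Finset.sum_eq_zero fun l hl => ?_
      rw [hM0 l (Finset.mem_Iio.1 hl), zero_div, zero_mul]
    rw [this, neg_zero, add_zero]
  · rw [if_neg (ne_of_gt h), mul_one]
    have h1 : (∏ k ∈ Finset.Iio i, (x j - x k)) = 0 :=
      Finset.prod_eq_zero (Finset.mem_Iio.2 h) (sub_self _)
    have h2 : ∑ l ∈ Finset.Iio j,
        (∏ k ∈ Finset.Iio i, (x l - x k)) / (∏ k ∈ Finset.Iio i, (x i - x k)) *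
          ((∏ k ∈ (Finset.Iio j).erase l, (x j - x k))
            / (∏ k ∈ (Finset.Iio j).erase l, (x l - x k))) = 0 := by
      refine Finset.sum_eq_zero fun l hl => ?_
      rw [hM0 l (lt_trans (Finset.mem_Iio.1 hl) h), zero_div, zero_mul]
    rw [h1, h2, zero_div, neg_zero, add_zero]

/-- `M_x (I - L_x) = I` over `ℚ(x_0, …, x_{m-1})`, where
`(L_x)_{ij} = ∏_{k ∈ [0,j[∖{i}}(x_j - x_k) / ∏_{k ∈ [0,j[∖{i}}(x_i - x_k)` for `i < j`,
`(L_x)_{ij} = 0` otherwise, and `(M_x)_{ij} = ∏_{k<i}(x_j - x_k)/∏_{k<i}(x_i - x_k)`. -/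
theorem stmt_7 (m : ℕ) (hm : 1 ≤ m) :
    letI K := FractionRing (MvPolynomial (Fin m) ℚ)
    let x : Fin m → K := fun i => algebraMap (MvPolynomial (Fin m) ℚ) K (MvPolynomial.X i)
    (Matrix.of fun i j : Fin m =>
        (∏ k ∈ Finset.Iio i, (x j - x k)) / (∏ k ∈ Finset.Iio i, (x i - x k)))
      * (1 - Matrix.of fun i j : Fin m =>
          if i < j then
            (∏ k ∈ (Finset.Iio j).erase i, (x j - x k))
              / (∏ k ∈ (Finset.Iio j).erase i, (x i - x k))
          else 0)
      = 1 := by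
  intro x
  have hx : Function.Injective x := by
    intro a b hab
    have : MvPolynomial.X (R := ℚ) a = MvPolynomial.X b :=
      IsFractionRing.injective (MvPolynomial (Fin m) ℚ) _ hab
    exact MvPolynomial.X_injective this
  exact matrix_key x hx
end

section
/- For all integers $i, k \geq 0$: $q^{ik} = \sum_{j \geq 0} \binom{i}{j}_q \binom{k}{j}_q \, q^{\binom{j}{2}} [j]! \,(q-1)^j$ in $\mathbb{Q}(q)$. Equivalently, the $q$-power matrix $V_q = (q^{ij})$ factors as $V_q = G_q D_q G_q^{\top}$ where $G_q$ is the $q$-Pascal matrix and $D_q$ is diagonal with entries $[i]!(q-1)^i q^{\binom{i}{2}}$. -/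
/-- The indeterminate `q` of `ℚ(q)`. -/
noncomputable def qq : RatFunc ℚ := RatFunc.X

/-- The `q`-integer `[i] = (q^i - 1)/(q - 1)`. -/
noncomputable def qint (i : ℕ) : RatFunc ℚ := (qq ^ i - 1) / (qq - 1)

/-- The `q`-factorial `[i]! = ∏_{k=1}^i [k]`. -/
noncomputable def qfac (i : ℕ) : RatFunc ℚ := ∏ k ∈ Finset.Icc 1 i, qint k

/-- The Gaussian binomial coefficient `[i choose j] = [i]!/([j]![i-j]!)` for `0 ≤ j ≤ i`,
zero for `j ∉ [0,i]`. -/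
noncomputable def qbinom (i : ℕ) (j : ℤ) : RatFunc ℚ :=
  if 0 ≤ j ∧ j ≤ (i : ℤ) then qfac i / (qfac j.toNat * qfac (i - j.toNat)) else 0

lemma pow_sub_one_ne (n : ℕ) (h : 1 ≤ n) : qq ^ n - 1 ≠ 0 := by
  have he : qq ^ n - 1 = algebraMap (Polynomial ℚ) (RatFunc ℚ) (Polynomial.X ^ n - 1) := by
    simp [qq, map_sub, map_pow, map_one, RatFunc.algebraMap_X]
  rw [he]
  apply RatFunc.algebraMap_ne_zero
  intro hp
  have h2 := congrArg (Polynomial.eval 0) hp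
  simp [zero_pow (by omega : n ≠ 0)] at h2

lemma qsub_ne : qq - 1 ≠ 0 := by simpa using pow_sub_one_ne 1 le_rfl

lemma qint_ne (i : ℕ) (h : 1 ≤ i) : qint i ≠ 0 :=
  div_ne_zero (pow_sub_one_ne i h) qsub_ne

lemma qfac_ne (n : ℕ) : qfac n ≠ 0 :=
  Finset.prod_ne_zero_iff.mpr fun k hk => qint_ne k (Finset.mem_Icc.mp hk).1

lemma qfac_zero : qfac 0 = 1 := by simp [qfac]

lemma qfac_succ (n : ℕ) : qfac (n+1) = qfac n * qint (n+1) := by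
  rw [qfac, qfac, Finset.prod_Icc_succ_top (by omega)]

lemma qint_mul (n : ℕ) : (qq - 1) * qint n = qq ^ n - 1 := by
  rw [qint, mul_div_cancel₀ _ qsub_ne]

lemma qbinom_le {i j : ℕ} (h : j ≤ i) :
    qbinom i (j : ℤ) = qfac i / (qfac j * qfac (i - j)) := by
  rw [qbinom, if_pos ⟨Int.natCast_nonneg j, by exact_mod_cast h⟩, Int.toNat_natCast]

lemma qbinom_gt {i j : ℕ} (h : i < j) : qbinom i (j : ℤ) = 0 := by
  rw [qbinom, if_neg (by omega)]

lemma qbinom_zero (i : ℕ) : qbinom i ((0:ℕ) : ℤ) = 1 := by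
  rw [qbinom_le (Nat.zero_le i)]
  simp [qfac_zero, div_self (qfac_ne i)]

lemma qbinom_self (i : ℕ) : qbinom i (i : ℤ) = 1 := by
  rw [qbinom_le le_rfl]
  simp [qfac_zero, div_self (qfac_ne i)]

lemma qint_pascal (j k : ℕ) (h : j ≤ k + 1) :
    qint (k+1) = qq ^ j * qint (k+1-j) + qint j := by
  have hp : qq ^ j * qq ^ (k+1-j) = qq ^ (k+1) := by
    rw [← pow_add]; congr 1; omega
  have hnum : qq^(k+1) - 1 = qq^j*(qq^(k+1-j)-1) + (qq^j - 1) := by linear_combination -hp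
  rw [qint, qint, qint, hnum]
  ring

lemma qbinom_pascal (k j : ℕ) :
    qbinom (k+1) ((j+1 : ℕ) : ℤ)
      = qq ^ (j+1) * qbinom k ((j+1 : ℕ) : ℤ) + qbinom k (j : ℤ) := by
  rcases lt_or_ge j k with h | h
  · -- j < k, generic case
    have h1 : (j:ℕ)+1 ≤ k := h
    rw [qbinom_le (by omega : j+1 ≤ k+1), qbinom_le h1, qbinom_le (by omega : j ≤ k)]
    have e1 : k + 1 - (j+1) = k - j := by omega
    have e2 : k - j = (k - (j+1)) + 1 := by omega
    rw [e1, e2, qfac_succ (k - (j+1)), qfac_succ j, qfac_succ k]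
    have pas : qint (k+1) = qq ^ (j+1) * qint (k - (j+1) + 1) + qint (j+1) := by
      have := qint_pascal (j+1) k (by omega)
      rwa [(by omega : k + 1 - (j+1) = k - (j+1) + 1)] at this
    rw [pas]
    have n1 := qfac_ne k
    have n2 := qfac_ne j
    have n3 := qfac_ne (k - (j+1))
    have n4 := qint_ne (j+1) (by omega)
    have n5 := qint_ne (k - (j+1) + 1) (by omega)
    field_simp
  · rcases eq_or_lt_of_le h with rfl | h2
    · rw [qbinom_gt (by omega : k < k+1), qbinom_self, mul_zero, zero_add]
      exact (qbinom_self k).symm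
    · rw [qbinom_gt (by omega : k < j+1), qbinom_gt (by omega : k < j),
        qbinom_gt (by omega : k+1 < j+1), mul_zero, zero_add]

noncomputable def Pp (i j : ℕ) : RatFunc ℚ := ∏ l ∈ Finset.range j, (qq ^ i - qq ^ l)

lemma Pp_succ (i j : ℕ) : Pp i (j+1) = Pp i j * (qq ^ i - qq ^ j) :=
  Finset.prod_range_succ _ _

lemma Pp_zero (i : ℕ) : Pp i 0 = 1 := by simp [Pp]

lemma Pp_top (i : ℕ) : Pp i (i+1) = 0 := by
  rw [Pp]
  exact Finset.prod_eq_zero (Finset.self_mem_range_succ i) (by simp)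

lemma term_eq (i : ℕ) : ∀ j, j ≤ i →
    qbinom i (j : ℤ) * qq ^ (j.choose 2) * qfac j * (qq - 1) ^ j = Pp i j := by
  intro j
  induction j with
  | zero =>
    intro _
    have h0 := qbinom_zero i
    simp only [Nat.cast_zero] at h0
    simp [h0, qfac_zero, Pp_zero]
  | succ j ih =>
    intro h
    rw [Pp_succ, ← ih (by omega)]
    rw [qbinom_le h, qbinom_le (by omega : j ≤ i)]
    have e2 : i - j = (i - (j+1)) + 1 := by omega
    rw [e2, qfac_succ (i - (j+1)), qfac_succ j]
    have hch : (j+1).choose 2 = j.choose 2 + j := by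
      simp [Nat.choose_succ_succ, Nat.choose_one_right]; omega
    rw [hch, pow_add, pow_succ]
    have hq : qq ^ j * qq ^ (i - (j+1) + 1) = qq ^ i := by
      rw [← pow_add]; congr 1; omega
    rw [← hq, qint, qint]
    have n1 := qfac_ne i
    have n2 := qfac_ne j
    have n3 := qfac_ne (i - (j+1))
    have n4 := pow_sub_one_ne (j+1) (by omega)
    have n5 := pow_sub_one_ne (i - (j+1) + 1) (by omega)
    have n0 := qsub_ne
    field_simp

lemma qbinom_zero' (i : ℕ) : qbinom i 0 = 1 := by
  have h0 := qbinom_zero i; simpa using h0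

lemma key_s11 (i k : ℕ) :
    qq ^ (i * k) = ∑ j ∈ Finset.range (i+1), qbinom k (j:ℤ) * Pp i j := by
  induction k with
  | zero =>
    rw [Nat.mul_zero, pow_zero, Finset.sum_range_succ']
    have hz : ∀ j ∈ Finset.range i, qbinom 0 ((j+1:ℕ):ℤ) * Pp i (j+1) = 0 := by
      intro j _
      rw [qbinom_gt (by omega), zero_mul]
    rw [Finset.sum_congr rfl hz, Finset.sum_const_zero, zero_add]
    simp [qbinom_zero', Pp_zero]
  | succ k ih =>
    calc qq ^ (i * (k+1))
        = (∑ j ∈ Finset.range (i+1), qbinom k (j:ℤ) * Pp i j) * qq ^ i := by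
          rw [← ih, ← pow_add, Nat.mul_succ]
      _ = ∑ j ∈ Finset.range (i+1),
            (qbinom k (j:ℤ) * Pp i (j+1) + qq ^ j * (qbinom k (j:ℤ) * Pp i j)) := by
          rw [Finset.sum_mul]
          refine Finset.sum_congr rfl fun j _ => ?_
          rw [Pp_succ]; ring
      _ = (∑ j ∈ Finset.range (i+1), qbinom k (j:ℤ) * Pp i (j+1))
            + ∑ j ∈ Finset.range (i+1), qq ^ j * (qbinom k (j:ℤ) * Pp i j) :=
          Finset.sum_add_distrib
      _ = (∑ j ∈ Finset.range i, qbinom k (j:ℤ) * Pp i (j+1))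
            + ((∑ j ∈ Finset.range i, qq ^ (j+1) * (qbinom k ((j+1:ℕ):ℤ) * Pp i (j+1))) + 1) := by
          rw [Finset.sum_range_succ, Pp_top, mul_zero, add_zero, Finset.sum_range_succ']
          simp [Pp_zero, qbinom_zero']
      _ = ∑ j ∈ Finset.range (i+1), qbinom (k+1) (j:ℤ) * Pp i j := by
          rw [Finset.sum_range_succ']
          have hp : ∀ j ∈ Finset.range i, qbinom (k+1) ((j+1:ℕ):ℤ) * Pp i (j+1)
              = qbinom k (j:ℤ) * Pp i (j+1) + qq ^ (j+1) * (qbinom k ((j+1:ℕ):ℤ) * Pp i (j+1)) := by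
            intro j _
            rw [qbinom_pascal]; ring
          rw [Finset.sum_congr rfl hp, Finset.sum_add_distrib]
          simp only [Pp_zero, qbinom_zero', Nat.cast_zero, mul_one]
          ring

lemma main_sum (a b : ℕ) :
    qq ^ (a * b) = ∑ j ∈ Finset.range (a+1),
      qbinom a (j:ℤ) * qbinom b (j:ℤ) * qq ^ (j.choose 2) * qfac j * (qq - 1) ^ j := by
  rw [key_s11 a b]
  refine Finset.sum_congr rfl fun j hj => ?_
  rw [Finset.mem_range] at hj
  rw [← term_eq a j (by omega)]
  ring

/-- `q^{ik} = ∑_{j ≥ 0} [i choose j][k choose j] q^{binom(j,2)} [j]! (q-1)^j`; equivalently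
`V_q = G_q D_q G_qᵀ`, with `(V_q)_{ab} = q^{ab}`, `G_q` the `q`-Pascal matrix and `D_q`
diagonal with entries `[a]!(q-1)^a q^{binom(a,2)}`. -/
theorem stmt_11 (i k : ℕ) (m : ℕ) (hm : 1 ≤ m) :
    qq ^ (i * k)
      = (∑ᶠ j : ℕ, qbinom i (j : ℤ) * qbinom k (j : ℤ) * qq ^ (j.choose 2) * qfac j
          * (qq - 1) ^ j)
    ∧ (Matrix.of fun a b : Fin m => qq ^ ((a : ℕ) * (b : ℕ)))
        = (Matrix.of fun a b : Fin m => qbinom a (b : ℤ))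
          * Matrix.diagonal (fun a : Fin m => qfac a * (qq - 1) ^ (a : ℕ) * qq ^ ((a : ℕ).choose 2))
          * Matrix.transpose (Matrix.of fun a b : Fin m => qbinom a (b : ℤ)) := by
  constructor
  · rw [finsum_eq_finset_sum_of_support_subset _
      (s := Finset.range (i+1)) ?_]
    · exact main_sum i k
    · intro j hj
      simp only [Finset.coe_range, Set.mem_Iio]
      by_contra h
      push_neg at h
      apply hj
      show qbinom i (j:ℤ) * qbinom k (j:ℤ) * qq ^ j.choose 2 * qfac j * (qq - 1) ^ j = 0
      rw [qbinom_gt (by omega : i < j)]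
      simp
  · ext a b
    rw [Matrix.mul_apply]
    simp only [Matrix.mul_diagonal, Matrix.transpose_apply, Matrix.of_apply]
    rw [Fin.sum_univ_eq_sum_range
      (fun c => qbinom (a:ℕ) (c:ℤ) * (qfac c * (qq - 1) ^ c * qq ^ (c.choose 2)) * qbinom (b:ℕ) (c:ℤ)) m]
    rw [main_sum a b]
    have hsub : Finset.range ((a:ℕ)+1) ⊆ Finset.range m := by
      intro x hx
      rw [Finset.mem_range] at *
      have := a.isLt
      omega
    rw [← Finset.sum_subset hsub (fun x _ hx => by
      rw [Finset.mem_range, not_lt] at hx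
      rw [qbinom_gt (by omega : (a:ℕ) < x)]
      ring)]
    refine Finset.sum_congr rfl fun j _ => ?_
    ring
end

section
/- Let $m \geq 1$ and $\zeta$ a primitive $m$-th root of unity. In $\mathbb{Q}(\zeta)$, the diagonalization $G_{\zeta^{-1}}^\top V_\zeta G_{\zeta^{-1}} = m(D_{\zeta^{-1}})^{-1}$ holds, where the right side is the diagonal matrix whose $(i+1)$-st diagonal entry, for $i \in [0,m-1]$, equals $m\,\zeta^{i^2} / \prod_{j=1}^{i}(1 - \zeta^j)$. In particular each such quotient is an algebraic integer in $\mathbb{Z}[\zeta]$. -/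
/-- The `q`-factorial `[i]! = ∏_{k=1}^i (q^k - 1)/(q - 1)` evaluated at `q : ℂ`. -/
noncomputable def qfacC (q : ℂ) (i : ℕ) : ℂ := ∏ k ∈ Finset.Icc 1 i, (q ^ k - 1) / (q - 1)

/-- The Gaussian binomial coefficient `[i choose j]` at `q : ℂ`,
zero for `j > i`. -/
noncomputable def qbinomC (q : ℂ) (i j : ℕ) : ℂ :=
  if j ≤ i then qfacC q i / (qfacC q j * qfacC q (i - j)) else 0


namespace S14
open Finset
variable {m : ℕ} {ζ : ℂ}

lemma zeta_ne (hm : 1 ≤ m) (hζ : IsPrimitiveRoot ζ m) : ζ ≠ 0 := by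
  intro h
  have := hζ.pow_eq_one
  rw [h, zero_pow (by omega)] at this
  exact zero_ne_one this

lemma qpow_ne_one (hζ : IsPrimitiveRoot ζ m) {k : ℕ} (h1 : 1 ≤ k) (h2 : k < m) :
    (ζ⁻¹) ^ k ≠ 1 := hζ.inv.pow_ne_one_of_pos_of_lt (by omega) h2

lemma q_sub_one_ne (hζ : IsPrimitiveRoot ζ m) (h : 2 ≤ m) : (ζ⁻¹ : ℂ) - 1 ≠ 0 := by
  have := qpow_ne_one hζ (k := 1) le_rfl h
  rw [pow_one] at this
  exact sub_ne_zero.mpr this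

lemma qfac_zero (q : ℂ) : qfacC q 0 = 1 := by simp [qfacC]

lemma qfac_succ (q : ℂ) (i : ℕ) :
    qfacC q (i + 1) = qfacC q i * ((q ^ (i + 1) - 1) / (q - 1)) := by
  rw [qfacC, qfacC, Finset.prod_Icc_succ_top (Nat.succ_le_succ (Nat.zero_le i))]

lemma qfac_ne (hζ : IsPrimitiveRoot ζ m) {i : ℕ} (hi : i < m) : qfacC ζ⁻¹ i ≠ 0 := by
  rw [qfacC]
  apply Finset.prod_ne_zero_iff.mpr
  intro k hk
  rw [mem_Icc] at hk
  have h2 : 2 ≤ m := by omega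
  exact div_ne_zero (sub_ne_zero.mpr (qpow_ne_one hζ hk.1 (by omega))) (q_sub_one_ne hζ h2)

lemma qbinom_of_gt {q : ℂ} {i j : ℕ} (h : i < j) : qbinomC q i j = 0 := if_neg (by omega)

lemma qbinom_self (hζ : IsPrimitiveRoot ζ m) {i : ℕ} (hi : i < m) : qbinomC ζ⁻¹ i i = 1 := by
  rw [qbinomC, if_pos le_rfl, Nat.sub_self, qfac_zero, mul_one, div_self (qfac_ne hζ hi)]

lemma qbinom_zero_right (hζ : IsPrimitiveRoot ζ m) {i : ℕ} (hi : i < m) :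
    qbinomC ζ⁻¹ i 0 = 1 := by
  rw [qbinomC, if_pos (Nat.zero_le i), Nat.sub_zero, qfac_zero, one_mul,
    div_self (qfac_ne hζ hi)]


lemma pascal_core (q : ℂ) (a d : ℕ)
    (hF : qfacC q (a + 1 + d) ≠ 0) (hA : qfacC q a ≠ 0) (hD : qfacC q d ≠ 0)
    (hqa : q ^ (a + 1) - 1 ≠ 0) (hqd : q ^ (d + 1) - 1 ≠ 0)
    (hq1 : q - 1 ≠ 0) (hq0 : q ≠ 0) :
    qbinomC q (a + 1 + d + 1) (a + 1)
      = q ^ (a + 1 + d + 1) * (q ^ (a + 1))⁻¹ * qbinomC q (a + 1 + d) a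
        + qbinomC q (a + 1 + d) (a + 1) := by
  rw [qbinomC, if_pos (by omega), qbinomC, if_pos (by omega), qbinomC, if_pos (by omega),
    show a + 1 + d + 1 - (a + 1) = d + 1 from by omega,
    show a + 1 + d - a = d + 1 from by omega,
    show a + 1 + d - (a + 1) = d from by omega]
  rw [show a + 1 + d + 1 = (a + 1 + d) + 1 from rfl, qfac_succ, qfac_succ, qfac_succ]
  rw [show a + 1 + d + 1 = (a + 1) + (d + 1) from by omega, pow_add]
  have hα0 : q ^ (a + 1) ≠ 0 := pow_ne_zero _ hq0
  generalize hα : q ^ (a + 1) = α at hqa hα0 ⊢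
  generalize hδ : q ^ (d + 1) = δ at hqd ⊢
  field_simp
  ring


lemma pascal (hm : 1 ≤ m) (hζ : IsPrimitiveRoot ζ m) {j a : ℕ} (hj : j + 1 < m) :
    qbinomC ζ⁻¹ (j + 1) (a + 1)
      = (ζ⁻¹) ^ (j + 1) * ζ ^ (a + 1) * qbinomC ζ⁻¹ j a + qbinomC ζ⁻¹ j (a + 1) := by
  have hζ0 : ζ ≠ 0 := zeta_ne hm hζ
  have hq0 : (ζ⁻¹ : ℂ) ≠ 0 := inv_ne_zero hζ0
  have hz : (ζ : ℂ) ^ (a + 1) = ((ζ⁻¹) ^ (a + 1))⁻¹ := by rw [inv_pow, inv_inv]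
  rcases lt_trichotomy a j with h | h | h
  · obtain ⟨d, rfl⟩ : ∃ d, j = a + 1 + d := ⟨j - a - 1, by omega⟩
    rw [hz]
    exact pascal_core ζ⁻¹ a d (qfac_ne hζ (by omega)) (qfac_ne hζ (by omega))
      (qfac_ne hζ (by omega))
      (sub_ne_zero.mpr (qpow_ne_one hζ (by omega) (by omega)))
      (sub_ne_zero.mpr (qpow_ne_one hζ (by omega) (by omega)))
      (q_sub_one_ne hζ (by omega)) hq0
  · subst h
    rw [qbinom_self hζ hj, qbinom_self hζ (by omega), qbinom_of_gt (by omega)]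
    rw [mul_one, add_zero, inv_pow]
    field_simp
  · rw [qbinom_of_gt (by omega), qbinom_of_gt (by omega), qbinom_of_gt (by omega)]
    simp

lemma boundary (hm : 1 ≤ m) (hζ : IsPrimitiveRoot ζ m) {b : ℕ} (hb : b + 1 < m) :
    qbinomC ζ⁻¹ (m - 1) (b + 1) = -(ζ ^ (b + 1)) * qbinomC ζ⁻¹ (m - 1) b := by
  have hζ0 : ζ ≠ 0 := zeta_ne hm hζ
  obtain ⟨e, rfl⟩ : ∃ e, m = b + 2 + e := ⟨m - (b + 2), by omega⟩
  have h2 : ζ ^ (b + 1) * (ζ⁻¹) ^ (b + 1) = 1 := by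
    rw [inv_pow, mul_inv_cancel₀ (pow_ne_zero _ hζ0)]
  have hmul : ζ ^ (b + 1) * ζ ^ (e + 1) = 1 := by
    rw [← pow_add, show (b + 1) + (e + 1) = b + 2 + e from by omega, hζ.pow_eq_one]
  have h1 : (ζ⁻¹ : ℂ) ^ (e + 1) = ζ ^ (b + 1) := by
    rw [inv_pow]; exact inv_eq_of_mul_eq_one_left hmul
  have key : (ζ⁻¹) ^ (e + 1) - 1 = -(ζ ^ (b + 1)) * ((ζ⁻¹) ^ (b + 1) - 1) := by
    rw [h1]; linear_combination h2
  rw [show b + 2 + e - 1 = b + 1 + e from by omega]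
  rw [qbinomC, if_pos (by omega), qbinomC, if_pos (by omega),
    show b + 1 + e - (b + 1) = e from by omega,
    show b + 1 + e - b = e + 1 from by omega]
  rw [qfac_succ, qfac_succ, key]
  have hP : qfacC ζ⁻¹ (b + 1 + e) ≠ 0 := qfac_ne hζ (by omega)
  have hB : qfacC ζ⁻¹ b ≠ 0 := qfac_ne hζ (by omega)
  have hE : qfacC ζ⁻¹ e ≠ 0 := qfac_ne hζ (by omega)
  have hq1 : (ζ⁻¹ : ℂ) - 1 ≠ 0 := q_sub_one_ne hζ (by omega)
  have hβ : (ζ⁻¹) ^ (b + 1) - 1 ≠ 0 :=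
    sub_ne_zero.mpr (qpow_ne_one hζ (by omega) (by omega))
  have hβ2 : -(ζ ^ (b + 1)) * ((ζ⁻¹) ^ (b + 1) - 1) ≠ 0 :=
    mul_ne_zero (neg_ne_zero.mpr (pow_ne_zero _ hζ0)) hβ
  have hD1 : qfacC ζ⁻¹ b * (((ζ⁻¹) ^ (b + 1) - 1) / (ζ⁻¹ - 1)) * qfacC ζ⁻¹ e ≠ 0 :=
    mul_ne_zero (mul_ne_zero hB (div_ne_zero hβ hq1)) hE
  have hD2 : qfacC ζ⁻¹ b * (qfacC ζ⁻¹ e * ((-(ζ ^ (b + 1)) * ((ζ⁻¹) ^ (b + 1) - 1)) / (ζ⁻¹ - 1))) ≠ 0 :=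
    mul_ne_zero hB (mul_ne_zero hE (div_ne_zero hβ2 hq1))
  conv_rhs => rw [← mul_div_assoc]
  rw [div_eq_div_iff hD1 hD2]
  ring


noncomputable def Tsum (m : ℕ) (ζ : ℂ) (b : ℕ) (x : ℂ) : ℂ :=
  ∑ j ∈ Finset.range m, qbinomC ζ⁻¹ j b * x ^ j

lemma T_rec (hm : 1 ≤ m) (hζ : IsPrimitiveRoot ζ m) {b : ℕ} (hb : b + 1 < m) {x : ℂ}
    (hx : x ^ m = 1) :
    (1 - x) * Tsum m ζ (b + 1) x = ζ ^ b * x * Tsum m ζ b (ζ⁻¹ * x) := by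
  have hζ0 : ζ ≠ 0 := zeta_ne hm hζ
  have hinv : (ζ⁻¹ : ℂ) * ζ = 1 := inv_mul_cancel₀ hζ0
  obtain ⟨n, rfl⟩ : ∃ n, m = n + 1 := ⟨m - 1, by omega⟩
  have hbd : qbinomC ζ⁻¹ n (b + 1) = -(ζ ^ (b + 1)) * qbinomC ζ⁻¹ n b := by
    simpa using boundary hm hζ hb
  have hqnn : (ζ⁻¹ : ℂ) ^ n = ζ := by
    have h := hζ.inv.pow_eq_one
    rw [pow_succ] at h
    calc (ζ⁻¹ : ℂ) ^ n = (ζ⁻¹) ^ n * (ζ⁻¹ * ζ) := by rw [hinv, mul_one]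
      _ = ((ζ⁻¹) ^ n * ζ⁻¹) * ζ := by ring
      _ = ζ := by rw [h, one_mul]
  have main : Tsum (n + 1) ζ (b + 1) x
      = ζ ^ b * x * (Tsum (n + 1) ζ b (ζ⁻¹ * x) - qbinomC ζ⁻¹ n b * (ζ⁻¹ * x) ^ n)
        + x * (Tsum (n + 1) ζ (b + 1) x - qbinomC ζ⁻¹ n (b + 1) * x ^ n) := by
    calc Tsum (n + 1) ζ (b + 1) x
        = (∑ j ∈ Finset.range n, qbinomC ζ⁻¹ (j + 1) (b + 1) * x ^ (j + 1))
            + qbinomC ζ⁻¹ 0 (b + 1) * x ^ 0 := by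
          rw [Tsum]; exact Finset.sum_range_succ' _ n
      _ = ∑ j ∈ Finset.range n,
            ((ζ⁻¹) ^ (j + 1) * ζ ^ (b + 1) * qbinomC ζ⁻¹ j b + qbinomC ζ⁻¹ j (b + 1))
              * x ^ (j + 1) := by
          rw [qbinom_of_gt (by omega), zero_mul, add_zero]
          exact Finset.sum_congr rfl fun j hj => by
            rw [pascal hm hζ (by simpa using Finset.mem_range.mp hj)]
      _ = ζ ^ b * x * (∑ j ∈ Finset.range n, qbinomC ζ⁻¹ j b * (ζ⁻¹ * x) ^ j)
            + x * (∑ j ∈ Finset.range n, qbinomC ζ⁻¹ j (b + 1) * x ^ j) := by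
          rw [Finset.mul_sum, Finset.mul_sum, ← Finset.sum_add_distrib]
          refine Finset.sum_congr rfl fun j hj => ?_
          rw [mul_pow]
          linear_combination (qbinomC ζ⁻¹ j b * x ^ (j + 1) * (ζ⁻¹) ^ j * ζ ^ b) * hinv
      _ = ζ ^ b * x * (Tsum (n + 1) ζ b (ζ⁻¹ * x) - qbinomC ζ⁻¹ n b * (ζ⁻¹ * x) ^ n)
            + x * (Tsum (n + 1) ζ (b + 1) x - qbinomC ζ⁻¹ n (b + 1) * x ^ n) := by
          rw [Tsum, Tsum, Finset.sum_range_succ, Finset.sum_range_succ]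
          ring
  have hzero : ζ ^ b * x * (qbinomC ζ⁻¹ n b * (ζ⁻¹ * x) ^ n)
      + x * (qbinomC ζ⁻¹ n (b + 1) * x ^ n) = 0 := by
    rw [hbd, mul_pow, hqnn]
    have hx1 : x ^ n * x = 1 := by rw [← pow_succ]; exact hx
    linear_combination (ζ ^ (b + 1) * qbinomC ζ⁻¹ n b - ζ ^ (b + 1) * qbinomC ζ⁻¹ n b) * hx1
  linear_combination main - hzero


lemma T_zero_base (hm : 1 ≤ m) (hζ : IsPrimitiveRoot ζ m) {x : ℂ} :
    Tsum m ζ 0 x = ∑ j ∈ Finset.range m, x ^ j := by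
  rw [Tsum]
  exact Finset.sum_congr rfl fun j hj => by
    rw [qbinom_zero_right hζ (Finset.mem_range.mp hj), one_mul]

lemma T_vanish (hm : 1 ≤ m) (hζ : IsPrimitiveRoot ζ m) :
    ∀ b i : ℕ, b < i → i < m → Tsum m ζ b (ζ ^ i) = 0 := by
  have hζ0 : ζ ≠ 0 := zeta_ne hm hζ
  intro b
  induction b with
  | zero =>
    intro i h1 h2
    rw [T_zero_base hm hζ, geom_sum_eq (hζ.pow_ne_one_of_pos_of_lt (by omega) h2)]
    rw [← pow_mul, mul_comm, pow_mul, hζ.pow_eq_one, one_pow, sub_self, zero_div]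
  | succ b ih =>
    intro i h1 h2
    have hxm : (ζ ^ i) ^ m = 1 := by
      rw [← pow_mul, mul_comm, pow_mul, hζ.pow_eq_one, one_pow]
    have hrec := T_rec hm hζ (show b + 1 < m by omega) hxm
    obtain ⟨k, rfl⟩ : ∃ k, i = k + 1 := ⟨i - 1, by omega⟩
    have hxi : ζ⁻¹ * ζ ^ (k + 1) = ζ ^ k := by
      rw [pow_succ]
      field_simp
    rw [hxi, ih k (by omega) (by omega), mul_zero] at hrec
    have hne : (1 : ℂ) - ζ ^ (k + 1) ≠ 0 :=
      sub_ne_zero.mpr (Ne.symm (hζ.pow_ne_one_of_pos_of_lt (by omega) h2))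
    exact (mul_eq_zero.mp hrec).resolve_left hne

lemma T_diag (hm : 1 ≤ m) (hζ : IsPrimitiveRoot ζ m) :
    ∀ a : ℕ, a < m →
      Tsum m ζ a (ζ ^ a) = m * ζ ^ (a ^ 2) / ∏ j ∈ Finset.Icc 1 a, (1 - ζ ^ j) := by
  have hζ0 : ζ ≠ 0 := zeta_ne hm hζ
  intro a
  induction a with
  | zero =>
    intro _
    rw [T_zero_base hm hζ]
    simp
  | succ a ih =>
    intro ha
    have hxm : (ζ ^ (a + 1)) ^ m = 1 := by
      rw [← pow_mul, mul_comm, pow_mul, hζ.pow_eq_one, one_pow]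
    have hrec := T_rec hm hζ ha hxm
    have hxi : ζ⁻¹ * ζ ^ (a + 1) = ζ ^ a := by rw [pow_succ]; field_simp
    rw [hxi, ih (by omega)] at hrec
    have hne : (1 : ℂ) - ζ ^ (a + 1) ≠ 0 :=
      sub_ne_zero.mpr (Ne.symm (hζ.pow_ne_one_of_pos_of_lt (by omega) ha))
    have hprod : (∏ j ∈ Finset.Icc 1 a, (1 - ζ ^ j)) ≠ 0 := by
      apply Finset.prod_ne_zero_iff.mpr
      intro j hj
      rw [Finset.mem_Icc] at hj
      exact sub_ne_zero.mpr (Ne.symm (hζ.pow_ne_one_of_pos_of_lt (by omega) (by omega)))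
    rw [Finset.prod_Icc_succ_top (Nat.succ_le_succ (Nat.zero_le a))]
    rw [eq_div_iff (mul_ne_zero hprod hne)]
    field_simp at hrec
    linear_combination hrec

lemma qbinom_mem (hm : 1 ≤ m) (hζ : IsPrimitiveRoot ζ m) :
    ∀ j, j < m → ∀ a, qbinomC ζ⁻¹ j a ∈ Algebra.adjoin ℤ ({ζ} : Set ℂ) := by
  have hζ0 : ζ ≠ 0 := zeta_ne hm hζ
  have hζmem : ζ ∈ Algebra.adjoin ℤ ({ζ} : Set ℂ) := Algebra.subset_adjoin rfl
  have hinv : (ζ⁻¹ : ℂ) ∈ Algebra.adjoin ℤ ({ζ} : Set ℂ) := by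
    have hmo : ζ * ζ ^ (m - 1) = 1 := by
      rw [← pow_succ', show m - 1 + 1 = m from by omega, hζ.pow_eq_one]
    rw [inv_eq_of_mul_eq_one_right hmo]
    exact pow_mem hζmem _
  intro j
  induction j with
  | zero =>
    intro _ a
    match a with
    | 0 => rw [qbinom_zero_right hζ (by omega)]; exact one_mem _
    | a + 1 => rw [qbinom_of_gt (by omega)]; exact zero_mem _
  | succ j ih =>
    intro hj a
    match a with
    | 0 => rw [qbinom_zero_right hζ hj]; exact one_mem _
    | a + 1 =>
      rw [pascal hm hζ hj]
      exact add_mem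
        (mul_mem (mul_mem (pow_mem hinv _) (pow_mem hζmem _)) (ih (by omega) a))
        (ih (by omega) (a + 1))

set_option maxHeartbeats 1000000 in
lemma diag_mem (hm : 1 ≤ m) (hζ : IsPrimitiveRoot ζ m) {i : ℕ} (hi : i < m) :
    (m : ℂ) * ζ ^ (i ^ 2) / ∏ j ∈ Finset.Icc 1 i, (1 - ζ ^ j)
      ∈ Algebra.adjoin ℤ ({ζ} : Set ℂ) := by
  rw [← T_diag hm hζ i hi, Tsum]
  refine Subalgebra.sum_mem _ fun j hj => ?_
  refine Subalgebra.mul_mem _ (qbinom_mem hm hζ j (Finset.mem_range.mp hj) i) ?_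
  have h1 : ζ ∈ Algebra.adjoin ℤ ({ζ} : Set ℂ) := Algebra.subset_adjoin rfl
  exact Subalgebra.pow_mem _ (Subalgebra.pow_mem _ h1 i) j

end S14

set_option maxHeartbeats 1000000 in
/-- For a primitive `m`-th root of unity `ζ`, the diagonalization
`G_{ζ⁻¹}ᵀ V_ζ G_{ζ⁻¹} = m (D_{ζ⁻¹})⁻¹` holds, where the right hand side is the diagonal
matrix with `(i+1)`-st entry `m ζ^{i²} / ∏_{j=1}^{i} (1 - ζ^j)`; moreover each such
entry lies in `ℤ[ζ]`. -/
theorem stmt_14 (m : ℕ) (hm : 1 ≤ m) (ζ : ℂ) (hζ : IsPrimitiveRoot ζ m) :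
    Matrix.transpose (Matrix.of fun i j : Fin m => qbinomC ζ⁻¹ i j)
        * (Matrix.of fun i j : Fin m => ζ ^ ((i : ℕ) * (j : ℕ)))
        * (Matrix.of fun i j : Fin m => qbinomC ζ⁻¹ i j)
      = Matrix.diagonal (fun i : Fin m =>
          (m : ℂ) * ζ ^ ((i : ℕ) ^ 2) / ∏ j ∈ Finset.Icc 1 (i : ℕ), (1 - ζ ^ j))
    ∧ ∀ i : Fin m,
        (m : ℂ) * ζ ^ ((i : ℕ) ^ 2) / ∏ j ∈ Finset.Icc 1 (i : ℕ), (1 - ζ ^ j)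
          ∈ Algebra.adjoin ℤ ({ζ} : Set ℂ) := by
  have hζ0 : ζ ≠ 0 := S14.zeta_ne hm hζ
  set M : Matrix (Fin m) (Fin m) ℂ :=
    Matrix.transpose (Matrix.of fun i j : Fin m => qbinomC ζ⁻¹ i j)
        * (Matrix.of fun i j : Fin m => ζ ^ ((i : ℕ) * (j : ℕ)))
        * (Matrix.of fun i j : Fin m => qbinomC ζ⁻¹ i j) with hM
  have hdouble : ∀ a b : Fin m,
      M a b = ∑ y : Fin m, ∑ x : Fin m,
        qbinomC ζ⁻¹ (y : ℕ) (a : ℕ) * ζ ^ ((y : ℕ) * (x : ℕ)) * qbinomC ζ⁻¹ (x : ℕ) (b : ℕ) := by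
    intro a b
    rw [hM]
    simp only [Matrix.mul_apply, Matrix.transpose_apply, Matrix.of_apply]
    rw [Finset.sum_comm]
    refine Finset.sum_congr rfl fun y _ => ?_
    rw [Finset.sum_mul]
  have hentry : ∀ a b : Fin m,
      M a b = ∑ y : Fin m, qbinomC ζ⁻¹ (y : ℕ) (a : ℕ) * S14.Tsum m ζ (b : ℕ) (ζ ^ (y : ℕ)) := by
    intro a b
    rw [hdouble a b]
    refine Finset.sum_congr rfl fun y _ => ?_
    rw [S14.Tsum,
      ← Fin.sum_univ_eq_sum_range (fun j => qbinomC ζ⁻¹ j (b : ℕ) * (ζ ^ (y : ℕ)) ^ j) m,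
      Finset.mul_sum]
    refine Finset.sum_congr rfl fun x _ => ?_
    rw [← pow_mul]
    ring
  have hswap : ∀ a b : Fin m, M a b = M b a := by
    intro a b
    rw [hdouble a b, hdouble b a, Finset.sum_comm]
    refine Finset.sum_congr rfl fun x _ => Finset.sum_congr rfl fun y _ => ?_
    rw [Nat.mul_comm (y : ℕ) (x : ℕ)]
    ring
  have hoff : ∀ a b : Fin m, (b : ℕ) < (a : ℕ) → M a b = 0 := by
    intro a b hba
    rw [hentry a b]
    refine Finset.sum_eq_zero fun i _ => ?_
    rcases lt_or_ge (i : ℕ) (a : ℕ) with h | h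
    · rw [S14.qbinom_of_gt h, zero_mul]
    · rw [S14.T_vanish hm hζ (b : ℕ) (i : ℕ) (by omega) i.isLt, mul_zero]
  have hdiag : ∀ a : Fin m,
      M a a = (m : ℂ) * ζ ^ ((a : ℕ) ^ 2) / ∏ j ∈ Finset.Icc 1 (a : ℕ), (1 - ζ ^ j) := by
    intro a
    rw [hentry a a]
    rw [Finset.sum_eq_single a]
    · rw [S14.qbinom_self hζ a.isLt, one_mul, S14.T_diag hm hζ (a : ℕ) a.isLt]
    · intro i _ hne
      rcases lt_or_ge (i : ℕ) (a : ℕ) with h | h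
      · rw [S14.qbinom_of_gt h, zero_mul]
      · have : (a : ℕ) < (i : ℕ) := by
          rcases Nat.lt_or_ge (a : ℕ) (i : ℕ) with h' | h'
          · exact h'
          · exact absurd (Fin.ext (le_antisymm h h')).symm hne
        rw [S14.T_vanish hm hζ (a : ℕ) (i : ℕ) this i.isLt, mul_zero]
    · intro h
      exact absurd (Finset.mem_univ a) h
  constructor
  · ext a b
    rcases eq_or_ne a b with rfl | hne
    · rw [Matrix.diagonal_apply_eq, hdiag a]
    · rw [Matrix.diagonal_apply_ne _ hne]
      rcases Nat.lt_or_ge (b : ℕ) (a : ℕ) with h | h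
      · exact hoff a b h
      · have h' : (a : ℕ) < (b : ℕ) := by
          rcases Nat.lt_or_ge (a : ℕ) (b : ℕ) with h' | h'
          · exact h'
          · exact absurd (Fin.ext (le_antisymm h h')) hne
        rw [hswap a b]
        exact hoff b a h'
  · intro i
    exact S14.diag_mem hm hζ i.isLt
end

section
/- For $k \geq 1$ and a prime $p$, setting $f_k(X) := -\sum_{i=0}^{p-2}(p-1-i)X^{ip^{k-1}}$ and $g_k(X) := \sum_{i=0}^{p^{n-k}-1}\big(-(p^{n-k+1} - p(i+1))X^{ip^k + p^{k-1}} + (p^{n-k+1} - p(i+1) + 1)X^{ip^k}\big)$, one has in $\mathbb{Z}[X]$: $f_k(X) \cdot \prod_{i \in [0,n] \setminus \{k\}} \Phi_{p^i}(X) + g_k(X) \cdot \Phi_{p^k}(X) = p^{n-k+1}$, where $\Phi_{p^i}$ is the $p^i$-th cyclotomic polynomial and $n \geq k$. -/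
lemma tele17 (q : ℕ) (z : Polynomial ℤ) :
    (∑ i ∈ Finset.range q, Polynomial.C ((q : ℤ) - 1 - (i : ℤ)) * z ^ i) * (z - 1)
      = (∑ i ∈ Finset.range q, z ^ i) - Polynomial.C (q : ℤ) := by
  induction q with
  | zero => simp
  | succ q ih =>
    have hA : (∑ i ∈ Finset.range (q + 1), Polynomial.C (((q : ℤ) + 1) - 1 - (i : ℤ)) * z ^ i)
        = (∑ i ∈ Finset.range q, Polynomial.C ((q : ℤ) - 1 - (i : ℤ)) * z ^ i)
          + ∑ i ∈ Finset.range q, z ^ i := by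
      rw [Finset.sum_range_succ, ← Finset.sum_add_distrib]
      have h0 : ((q : ℤ) + 1) - 1 - (q : ℤ) = 0 := by ring
      rw [h0]
      simp only [Polynomial.C_0, zero_mul, add_zero]
      refine Finset.sum_congr rfl fun i hi => ?_
      have : ((q : ℤ) + 1) - 1 - (i : ℤ) = ((q : ℤ) - 1 - (i : ℤ)) + 1 := by ring
      rw [this, Polynomial.C_add, Polynomial.C_1, add_mul, one_mul]
    push_cast
    rw [hA, add_mul, ih, geom_sum_mul, Finset.sum_range_succ, Polynomial.C_add, Polynomial.C_1]
    ring

lemma core17 (p m : ℕ) (y : Polynomial ℤ) :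
    (-(∑ i ∈ Finset.range p, Polynomial.C ((p : ℤ) - 1 - (i : ℤ)) * y ^ i)) * (y ^ (p * m) - 1)
      + ((∑ i ∈ Finset.range m, (y ^ p) ^ i)
          - Polynomial.C (p : ℤ) * (y - 1)
            * (∑ i ∈ Finset.range m, Polynomial.C ((m : ℤ) - 1 - (i : ℤ)) * (y ^ p) ^ i))
        * (∑ j ∈ Finset.range p, y ^ j) ^ 2
      = Polynomial.C ((p : ℤ) * (m : ℤ)) * (∑ j ∈ Finset.range p, y ^ j) := by
  have h1 := tele17 p y
  have h2 := geom_sum_mul y p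
  have h3 := tele17 m (y ^ p)
  have h4 := geom_sum_mul (y ^ p) m
  rw [← pow_mul] at h4
  rw [map_mul]
  set A := ∑ i ∈ Finset.range p, Polynomial.C ((p : ℤ) - 1 - (i : ℤ)) * y ^ i with hAdef
  set G := ∑ j ∈ Finset.range p, y ^ j with hGdef
  set B := ∑ i ∈ Finset.range m, Polynomial.C ((m : ℤ) - 1 - (i : ℤ)) * (y ^ p) ^ i with hBdef
  set T := ∑ i ∈ Finset.range m, (y ^ p) ^ i with hTdef
  linear_combination (-(T * G)) * h1 + (A * T - Polynomial.C (p : ℤ) * B * G) * h2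
    + (-(Polynomial.C (p : ℤ) * G)) * h3 + A * h4

/-- For a prime `p` and `1 ≤ k ≤ n`, with
`f_k(X) = -∑_{i=0}^{p-2}(p-1-i) X^{i p^{k-1}}` and
`g_k(X) = ∑_{i=0}^{p^{n-k}-1} (-(p^{n-k+1} - p(i+1)) X^{i p^k + p^{k-1}}
  + (p^{n-k+1} - p(i+1) + 1) X^{i p^k})`, one has in `ℤ[X]`:
`f_k · ∏_{i ∈ [0,n]∖{k}} Φ_{p^i} + g_k · Φ_{p^k} = p^{n-k+1}`. -/
theorem stmt_17 (p n k : ℕ) (hp : p.Prime) (hk : 1 ≤ k) (hkn : k ≤ n) :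
    (-(∑ i ∈ Finset.range (p - 1),
          Polynomial.C ((p : ℤ) - 1 - (i : ℤ)) * Polynomial.X ^ (i * p ^ (k - 1))))
        * (∏ i ∈ (Finset.range (n + 1)).erase k, Polynomial.cyclotomic (p ^ i) ℤ)
      + (∑ i ∈ Finset.range (p ^ (n - k)),
          (-(Polynomial.C ((p : ℤ) ^ (n - k + 1) - (p : ℤ) * ((i : ℤ) + 1)))
              * Polynomial.X ^ (i * p ^ k + p ^ (k - 1))
            + Polynomial.C ((p : ℤ) ^ (n - k + 1) - (p : ℤ) * ((i : ℤ) + 1) + 1)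
              * Polynomial.X ^ (i * p ^ k)))
          * Polynomial.cyclotomic (p ^ k) ℤ
      = Polynomial.C ((p : ℤ) ^ (n - k + 1)) := by
  have hp2 := hp.two_le
  set q : ℕ := p ^ (k - 1) with hqdef
  set m : ℕ := p ^ (n - k) with hmdef
  set y : Polynomial ℤ := Polynomial.X ^ q with hydef
  have hyp : y ^ p = Polynomial.X ^ (p ^ k) := by
    rw [hydef, ← pow_mul, hqdef, ← pow_succ]
    congr 2
    omega
  have hΦ : Polynomial.cyclotomic (p ^ k) ℤ = ∑ j ∈ Finset.range p, y ^ j := by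
    obtain ⟨k', rfl⟩ : ∃ k', k = k' + 1 := ⟨k - 1, by omega⟩
    rw [Polynomial.cyclotomic_prime_pow_eq_geom_sum hp]
    simp [hydef, hqdef]
  -- rewrite f
  have hf : (∑ i ∈ Finset.range (p - 1),
        Polynomial.C ((p : ℤ) - 1 - (i : ℤ)) * Polynomial.X ^ (i * q))
      = ∑ i ∈ Finset.range p, Polynomial.C ((p : ℤ) - 1 - (i : ℤ)) * y ^ i := by
    have hsucc := Finset.sum_range_succ
      (fun i => Polynomial.C ((p : ℤ) - 1 - (i : ℤ)) * y ^ i) (p - 1)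
    rw [show p - 1 + 1 = p from by omega] at hsucc
    rw [hsucc]
    have h0 : (p : ℤ) - 1 - ((p - 1 : ℕ) : ℤ) = 0 := by omega
    simp only [h0, Polynomial.C_0, zero_mul, add_zero]
    refine Finset.sum_congr rfl fun i hi => ?_
    rw [hydef, ← pow_mul, mul_comm q i]
  -- rewrite g
  have hg : (∑ i ∈ Finset.range m,
        (-(Polynomial.C ((p : ℤ) ^ (n - k + 1) - (p : ℤ) * ((i : ℤ) + 1)))
              * Polynomial.X ^ (i * p ^ k + q)
            + Polynomial.C ((p : ℤ) ^ (n - k + 1) - (p : ℤ) * ((i : ℤ) + 1) + 1)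
              * Polynomial.X ^ (i * p ^ k)))
      = (∑ i ∈ Finset.range m, (y ^ p) ^ i)
          - Polynomial.C (p : ℤ) * (y - 1)
            * (∑ i ∈ Finset.range m, Polynomial.C ((m : ℤ) - 1 - (i : ℤ)) * (y ^ p) ^ i) := by
    rw [Finset.mul_sum, ← Finset.sum_sub_distrib]
    refine Finset.sum_congr rfl fun i hi => ?_
    have hXi : Polynomial.X ^ (i * p ^ k) = (y ^ p) ^ i := by
      rw [hyp, ← pow_mul, mul_comm i (p ^ k)]
    have hXi' : Polynomial.X ^ (i * p ^ k + q) = (y ^ p) ^ i * y := by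
      rw [pow_add, hXi, hydef]
    have hcast : (p : ℤ) ^ (n - k + 1) = (p : ℤ) * (m : ℤ) := by
      rw [hmdef]; push_cast; ring
    rw [hXi, hXi', hcast]
    have e1 : Polynomial.C ((p : ℤ) * (m : ℤ) - (p : ℤ) * ((i : ℤ) + 1) + 1)
        = Polynomial.C ((p : ℤ) * (m : ℤ) - (p : ℤ) * ((i : ℤ) + 1)) + 1 := by
      rw [map_add, Polynomial.C_1]
    have e2 : Polynomial.C (p : ℤ) * Polynomial.C ((m : ℤ) - 1 - (i : ℤ))
        = Polynomial.C ((p : ℤ) * (m : ℤ) - (p : ℤ) * ((i : ℤ) + 1)) := by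
      rw [← map_mul]; congr 1; ring
    linear_combination (y ^ p) ^ i * e1 + (y - 1) * (y ^ p) ^ i * e2
  rw [hf, hg, hΦ]
  -- product of remaining cyclotomics
  have hk1 : k ∈ Finset.range (n + 1) := Finset.mem_range.mpr (by omega)
  have hprod : (∏ i ∈ (Finset.range (n + 1)).erase k, Polynomial.cyclotomic (p ^ i) ℤ)
      * (∑ j ∈ Finset.range p, y ^ j) = Polynomial.X ^ (p ^ n) - 1 := by
    rw [← hΦ, mul_comm,
      Finset.mul_prod_erase (Finset.range (n + 1))
        (fun i => Polynomial.cyclotomic (p ^ i) ℤ) hk1,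
      ← Nat.prod_divisors_prime_pow (f := fun d => Polynomial.cyclotomic d ℤ) hp,
      Polynomial.prod_cyclotomic_eq_X_pow_sub_one (pow_pos hp.pos n)]
  have hexp : q * (p * m) = p ^ n := by
    have h : p ^ (k - 1) * (p * p ^ (n - k)) = p ^ ((k - 1) + (1 + (n - k))) := by
      rw [pow_add, pow_add, pow_one]
    rw [hqdef, hmdef, h]
    congr 1
    omega
  have hXn : Polynomial.X ^ (p ^ n) = y ^ (p * m) := by
    rw [hydef, ← pow_mul, hexp]
  have hc : Polynomial.C ((p : ℤ) ^ (n - k + 1)) = Polynomial.C ((p : ℤ) * (m : ℤ)) := by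
    congr 1
    rw [hmdef]; push_cast; ring
  rw [hc]
  have hG0 : (∑ j ∈ Finset.range p, y ^ j) ≠ 0 := by
    rw [← hΦ]
    exact Polynomial.cyclotomic_ne_zero _ ℤ
  apply mul_right_cancel₀ hG0
  have hcore := core17 p m y
  rw [← hXn] at hcore
  linear_combination hcore + (-(∑ i ∈ Finset.range p,
      Polynomial.C ((p : ℤ) - 1 - (i : ℤ)) * y ^ i)) * hprod
end
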